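/- A pseudo-Riemannian manifold (M,g) of dimension n ≥ 3 is locally symmetric (∇R = 0) if and only if it is concircularly symmetric (∇C = 0). -/

import Mathlib

/-- A pseudo-Riemannian manifold of dimension `n ≥ 3` is locally
symmetric (`∇R = 0`) iff it is concircularly symmetric (`∇C = 0`).
`DR p ζ X Y Z W` denotes `(∇_ζ R)(X,Y,Z,W)`, `Dτ p ζ = ζ(τ)` (obtained from `∇R`
by metric contraction), and `∇C = ∇R - (dτ/(n(n-1))) ⊗ G`; the second Bianchi
identity is supplied for `∇R`. -/
theorem locally_symmetric_iff_concircularly_symmetric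
    {M V : Type*} [AddCommGroup V] [Module ℝ V]
    (n : ℕ) (hn : 3 ≤ n)
    (g : M → V → V → ℝ)
    (G : M → V → V → V → V → ℝ)
    (hG : ∀ p X Y Z W, G p X Y Z W = g p X Z * g p Y W - g p Y Z * g p X W)
    (DR : M → V → V → V → V → V → ℝ)
    (Dτ : M → V → ℝ)
    (DC : M → V → V → V → V → V → ℝ)
    (hDC : ∀ p ζ X Y Z W, DC p ζ X Y Z W =
      DR p ζ X Y Z W - (Dτ p ζ / ((n : ℝ) * ((n : ℝ) - 1))) * G p X Y Z W)
    (hDRskew : ∀ p ζ X Y Z W, DR p ζ X Y Z W = - DR p ζ Y X Z W)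
    (hDRpair : ∀ p ζ X Y Z W, DR p ζ X Y Z W = DR p ζ Z W X Y)
    (hBianchi2 : ∀ p U X Y Z W,
      DR p U X Y Z W + DR p X Y U Z W + DR p Y U X Z W = 0)
    (e : M → Fin n → V) (ε : Fin n → ℝ)
    (hε : ∀ i, ε i = 1 ∨ ε i = -1)
    (hortho : ∀ p i j, g p (e p i) (e p j) = if i = j then ε i else 0)
    (hDτ : ∀ p ζ, Dτ p ζ =
      ∑ i, ∑ j, ε i * ε j * DR p ζ (e p i) (e p j) (e p i) (e p j)) :
    (∀ p ζ X Y Z W, DR p ζ X Y Z W = 0) ↔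
      (∀ p ζ X Y Z W, DC p ζ X Y Z W = 0) := by
  have hεne : ∀ i, ε i ≠ 0 := by
    intro i; rcases hε i with h1 | h1 <;> rw [h1] <;> norm_num
  constructor
  · intro h p ζ X Y Z W
    have hτ : Dτ p ζ = 0 := by rw [hDτ]; simp [h]
    rw [hDC, h, hτ]; ring
  · intro h
    -- DR equals (Dτ/κ) * G
    have hDReq : ∀ q η A B C D,
        DR q η A B C D = (Dτ q η / ((n : ℝ) * ((n : ℝ) - 1))) * G q A B C D := by
      intro q η A B C D
      have := h q η A B C D
      rw [hDC] at this; linarith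
    -- key Bianchi consequence
    have key : ∀ q (η : V) i j, i ≠ j →
        Dτ q η / ((n : ℝ) * ((n : ℝ) - 1)) * (ε i * ε j)
          = Dτ q (e q i) / ((n : ℝ) * ((n : ℝ) - 1)) * (ε j * g q η (e q i))
          + Dτ q (e q j) / ((n : ℝ) * ((n : ℝ) - 1)) * (ε i * g q η (e q j)) := by
      intro q η i j hij
      have B := hBianchi2 q η (e q i) (e q j) (e q i) (e q j)
      rw [hDReq, hDReq, hDReq, hG, hG, hG, hortho, hortho, hortho, hortho] at B
      simp only [if_pos rfl, if_neg hij, if_neg hij.symm, if_true] at B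
      linear_combination B
    -- basis Dτ vanish
    have hbasis : ∀ q k, Dτ q (e q k) = 0 := by
      intro q k
      -- choose i j distinct from k and each other
      set i : Fin n := if k.val = 0 then ⟨1, by omega⟩ else ⟨0, by omega⟩ with hi
      set j : Fin n := if k.val ≤ 1 then ⟨2, by omega⟩ else ⟨1, by omega⟩ with hj
      have hij : i ≠ j := by
        rw [hi, hj]; split_ifs <;> simp [Fin.ext_iff] <;> omega
      have hki : k ≠ i := by
        rw [hi]; split_ifs with h1 <;> simp [Fin.ext_iff] <;> omega
      have hkj : k ≠ j := by
        rw [hj]; split_ifs with h1 <;> simp [Fin.ext_iff] <;> omega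
      have K := key q (e q k) i j hij
      rw [hortho, hortho, if_neg hki, if_neg hkj] at K
      have hκ : ((n : ℝ) * ((n : ℝ) - 1)) ≠ 0 := by
        have : (3 : ℝ) ≤ (n : ℝ) := by exact_mod_cast hn
        nlinarith
      have hei := hεne i
      have hej := hεne j
      simp only [mul_zero, zero_div, zero_mul, add_zero] at K
      rw [div_mul_eq_mul_div, div_eq_zero_iff, or_iff_left hκ] at K
      rcases mul_eq_zero.mp K with h' | h'
      · exact h'
      · exact absurd h' (mul_ne_zero hei hej)
    -- general Dτ vanish
    have hgen : ∀ q η, Dτ q η = 0 := by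
      intro q η
      have h01 : (⟨0, by omega⟩ : Fin n) ≠ ⟨1, by omega⟩ := by simp [Fin.ext_iff]
      have K := key q η ⟨0, by omega⟩ ⟨1, by omega⟩ h01
      rw [hbasis, hbasis] at K
      have hκ : ((n : ℝ) * ((n : ℝ) - 1)) ≠ 0 := by
        have : (3 : ℝ) ≤ (n : ℝ) := by exact_mod_cast hn
        nlinarith
      have h0 := hεne ⟨0, by omega⟩
      have h1 := hεne ⟨1, by omega⟩
      simp only [mul_zero, zero_div, zero_mul, add_zero] at K
      rw [div_mul_eq_mul_div, div_eq_zero_iff, or_iff_left hκ] at K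
      rcases mul_eq_zero.mp K with h' | h'
      · exact h'
      · exact absurd h' (mul_ne_zero h0 h1)
    intro p ζ X Y Z W
    rw [hDReq, hgen]; ring
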